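/- arXiv:2510.00951 — 2 statements merged into one kernel-verified Lean document; each statement's English description precedes it below -/
import Mathlib

section
/- Let P be a finite, graded, bounded poset of rank n ≥ 1. Then exΨ_P(y,a,b) = (a-b)^n + Poin_P(y)·b(a-b)^{n-1} + ∑_{0̂ < w < 1̂} ((a-b)^{rk(w)} + Poin_{[0̂,w]}(y)·b(a-b)^{rk(w)-1})·b·exΨ̃_{[w,1̂]}(y,a,b). -/
open Polynomial

noncomputable section

/-- The coefficient ring `ℤ[y]`. -/
abbrev NCR : Type := Polynomial ℤ

/-- The ring `ℤ[y]⟨a,b⟩` of noncommutative polynomials in the letters `a` (encoded `false`)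
and `b` (encoded `true`) with coefficients in `ℤ[y]`. -/
abbrev NCPoly : Type := MonoidAlgebra NCR (FreeMonoid Bool)

/-- The variable `a`. -/
def Aa : NCPoly := MonoidAlgebra.of NCR (FreeMonoid Bool) (FreeMonoid.of false)

/-- The variable `b`. -/
def Bb : NCPoly := MonoidAlgebra.of NCR (FreeMonoid Bool) (FreeMonoid.of true)

/-- The `ω`-transformation on a single `ab`-monomial (word in `a`,`b`): every occurrence of
the factor `ab` is replaced by `(1+y)ab + (y+y²)ba`, and then all remaining occurrences of `a`
are replaced by `a+yb` and of `b` by `b+ya`. -/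
def omegaWord : List Bool → NCPoly
  | [] => 1
  | false :: true :: rest =>
      (((1 + X : NCR)) • (Aa * Bb) + ((X + X ^ 2 : NCR)) • (Bb * Aa)) * omegaWord rest
  | false :: rest => (Aa + (X : NCR) • Bb) * omegaWord rest
  | true :: rest => (Bb + (X : NCR) • Aa) * omegaWord rest

/-- The `ω`-transformation on `ℤ[y]⟨a,b⟩`, extended linearly from `ab`-monomials. -/
def omega (f : NCPoly) : NCPoly :=
  (f.coeff : FreeMonoid Bool →₀ NCR).sum fun w c => c • omegaWord (FreeMonoid.toList w)

/-- The `ι`-transformation on `ℤ[y]⟨a,b⟩`: it removes the initial letter from every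
`ab`-monomial (and kills the empty monomial). -/
def iota (f : NCPoly) : NCPoly :=
  (f.coeff : FreeMonoid Bool →₀ NCR).sum fun w c =>
    match FreeMonoid.toList w with
    | [] => 0
    | _ :: rest => c • MonoidAlgebra.of NCR (FreeMonoid Bool) (FreeMonoid.ofList rest)

/-- `wt_S(a,b) = w_0 ⋯ w_{n-1}` where `w_k = b` if `k ∈ S` and `w_k = a - b` otherwise. -/
def wtS (n : ℕ) (S : Finset ℕ) : NCPoly :=
  ((List.range n).map fun j => if j ∈ S then Bb else Aa - Bb).prod

/-- Evaluation `f(y,a,b) ↦ f(-x,1,x)` used to define (augmented) Chow polynomials. -/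
def evalChow (f : NCPoly) : Polynomial ℤ :=
  (f.coeff : FreeMonoid Bool →₀ NCR).sum fun w c =>
    c.comp (-X) * X ^ ((FreeMonoid.toList w).count true)

/-- The `ab`-monomial `m_T = m_0 ⋯ m_{n-1}` with `m_i = b` if `i ∈ T` and `m_i = a` else. -/
def mT (n : ℕ) (T : Finset ℕ) : FreeMonoid Bool :=
  FreeMonoid.ofList ((List.range n).map fun i => decide (i ∈ T))

variable {P : Type*} [Fintype P] [PartialOrder P]

open Classical in
/-- The Möbius function of a finite poset:
`μ(w,w) = 1` and `μ(u,w) = -∑_{u ≤ v < w} μ(u,v)` for `u ≠ w`. -/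
def mobius (u : P) : P → ℤ
  | w =>
    if u = w then 1
    else - ∑ v ∈ (Finset.univ.filter fun v : P => u ≤ v ∧ v < w).attach, mobius u v.1
  termination_by w => (Finset.univ.filter fun v : P => u ≤ v ∧ v ≤ w).card
  decreasing_by
    have hv := v.2
    simp only [Finset.mem_filter, Finset.mem_univ, true_and] at hv
    apply Finset.card_lt_card
    constructor
    · intro x hx
      simp only [Finset.mem_filter, Finset.mem_univ, true_and] at hx ⊢
      exact ⟨hx.1, hx.2.trans hv.2.le⟩
    · intro hsub
      have hw : w ∈ Finset.univ.filter fun v : P => u ≤ v ∧ v ≤ w := by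
        simp only [Finset.mem_filter, Finset.mem_univ, true_and]
        exact ⟨hv.1.trans hv.2.le, le_refl w⟩
      have := hsub hw
      simp only [Finset.mem_filter, Finset.mem_univ, true_and] at this
      exact absurd (lt_of_le_of_lt this.2 hv.2) (lt_irrefl w)

open Classical in
/-- The Poincaré polynomial of the interval `[u,w]`, with respect to the rank function `rk`:
`Poin_{[u,w]}(y) = ∑_{u ≤ v ≤ w} μ(u,v)·(-y)^{rk(v) - rk(u)}`. -/
def poin (rk : P → ℕ) (u w : P) : Polynomial ℤ :=
  ∑ v ∈ Finset.univ.filter fun v : P => u ≤ v ∧ v ≤ w,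
    mobius u v • (-X : Polynomial ℤ) ^ (rk v - rk u)

variable [BoundedOrder P]

open Classical in
/-- The extended `ab`-index of the interval `[u₀, ⊤]` of `P` (with ranks taken relative
to `u₀`): the sum over all chains `u₀ ≤ C_1 < ⋯ < C_k < C_{k+1} = ⊤` of
`Poin_{P,C}(y)·wt_C(a,b)`. -/
def exPsiFrom (rk : P → ℕ) (u₀ : P) : NCPoly :=
  ∑ k ∈ Finset.range (Fintype.card P),
    ∑ c ∈ Finset.univ.filter fun c : Fin (k + 1) → P =>
        StrictMono c ∧ c (Fin.last k) = (⊤ : P) ∧ u₀ ≤ c 0,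
      (∏ i : Fin k, poin rk (c i.castSucc) (c i.succ)) •
        wtS (rk (⊤ : P) - rk u₀) (Finset.univ.image fun i : Fin k => rk (c i.castSucc) - rk u₀)

open Classical in
/-- The `ab`-index of the interval `[u₀, ⊤]` of `P`: the sum over all chains
`u₀ ≤ C_1 < ⋯ < C_k < C_{k+1} = ⊤` of `wt_C(a,b)`. -/
def psiFrom (rk : P → ℕ) (u₀ : P) : NCPoly :=
  ∑ k ∈ Finset.range (Fintype.card P),
    ∑ c ∈ Finset.univ.filter fun c : Fin (k + 1) → P =>
        StrictMono c ∧ c (Fin.last k) = (⊤ : P) ∧ u₀ ≤ c 0,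
      wtS (rk (⊤ : P) - rk u₀) (Finset.univ.image fun i : Fin k => rk (c i.castSucc) - rk u₀)

/-- `exΨ̃ = ι(exΨ)` for the interval `[u₀, ⊤]`. -/
def exPsiTildeFrom (rk : P → ℕ) (u₀ : P) : NCPoly := iota (exPsiFrom rk u₀)

/-- `Ψ̃ = ι(Ψ)` for the interval `[u₀, ⊤]`. -/
def psiTildeFrom (rk : P → ℕ) (u₀ : P) : NCPoly := iota (psiFrom rk u₀)

open Classical in
/-- The flag `f`-vector `α(S)`: the number of maximal chains of the rank-selected subposet,
i.e. of chains `C_1 < ⋯ < C_k < C_{k+1} = ⊤` with `{rk(C_1), …, rk(C_k)} = S`. -/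
def flagAlpha (rk : P → ℕ) (S : Finset ℕ) : ℕ :=
  ∑ k ∈ Finset.range (Fintype.card P),
    (Finset.univ.filter fun c : Fin (k + 1) → P =>
      StrictMono c ∧ c (Fin.last k) = (⊤ : P) ∧
        (Finset.univ.image fun i : Fin k => rk (c i.castSucc)) = S).card

/-- The flag `h`-vector `β(T) = ∑_{S ⊆ T} (-1)^{|T∖S|} α(S)`. -/
def flagBeta (rk : P → ℕ) (T : Finset ℕ) : ℤ :=
  ∑ S ∈ T.powerset, (-1 : ℤ) ^ (T \ S).card * (flagAlpha rk S : ℤ)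

/-- An `R`-labeling of the graded poset `P`: every nontrivial interval `[u,w]` has a unique
maximal (i.e. saturated) chain with weakly increasing labels. -/
def IsRLabeling (rk : P → ℕ) (lab : P → P → ℤ) : Prop :=
  ∀ u w : P, u < w →
    ∃! c : Fin (rk w - rk u + 1) → P,
      c 0 = u ∧ c (Fin.last (rk w - rk u)) = w ∧
        (∀ i : Fin (rk w - rk u), c i.castSucc ⋖ c i.succ) ∧
        ∀ i j : Fin (rk w - rk u), i ≤ j →
          lab (c i.castSucc) (c i.succ) ≤ lab (c j.castSucc) (c j.succ)

/-- The label sequence `(λ_0, …, λ_n)` of a maximal chain `c` with sign-set `E`: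
`λ_0 = 0` and `λ_i = ±λ(c_{i-1}, c_i)`, negative exactly when `i ∈ E`. -/
def lamSeq {n : ℕ} (lab : P → P → ℤ) (c : Fin (n + 1) → P) (E : Finset ℕ) :
    Fin (n + 1) → ℤ :=
  fun j =>
    if j = 0 then 0
    else (if (j : ℕ) ∈ E then -1 else 1) * lab (c ⟨j.1 - 1, by omega⟩) (c j)

/-- The `ab`-monomial `m(M,E) = m_0 ⋯ m_{n-1}` with `m_i = b` if `λ_i > λ_{i+1}`
and `m_i = a` if `λ_i ≤ λ_{i+1}`. -/
def rlabWord {n : ℕ} (lab : P → P → ℤ) (c : Fin (n + 1) → P) (E : Finset ℕ) :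
    FreeMonoid Bool :=
  FreeMonoid.ofList
    (List.ofFn fun i : Fin n => decide (lamSeq lab c E i.succ < lamSeq lab c E i.castSucc))

end

set_option maxHeartbeats 1000000
set_option linter.unusedSectionVars false

open Polynomial
noncomputable section

def iotaWordL (w : FreeMonoid Bool) : NCPoly :=
  match FreeMonoid.toList w with
  | [] => 0
  | _ :: rest => MonoidAlgebra.of NCR (FreeMonoid Bool) (FreeMonoid.ofList rest)

def iotaL : NCPoly →ₗ[NCR] NCPoly :=
  (Finsupp.lsum ℕ fun w => LinearMap.toSpanSingleton NCR NCPoly (iotaWordL w)) ∘ₗ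
    (MonoidAlgebra.coeffLinearEquiv NCR).toLinearMap

lemma iota_eq_iotaL (f : NCPoly) : iota f = iotaL f := by
  rw [iota, iotaL, LinearMap.comp_apply]
  erw [Finsupp.lsum_apply]
  apply Finsupp.sum_congr
  intro w _
  rw [LinearMap.toSpanSingleton_apply, iotaWordL]
  cases h : FreeMonoid.toList w with
  | nil => simp [h]
  | cons x rest => simp [h]

lemma iotaL_single (w : FreeMonoid Bool) (c : NCR) :
    iotaL (MonoidAlgebra.single w c) = c • iotaWordL w := by
  rw [iotaL, LinearMap.comp_apply]
  erw [Finsupp.lsum_single]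
  rfl

lemma iotaL_of_mul (x : Bool) (f : NCPoly) :
    iotaL (MonoidAlgebra.of NCR (FreeMonoid Bool) (FreeMonoid.of x) * f) = f := by
  induction f using MonoidAlgebra.induction_linear with
  | zero => simp
  | add g h hg hh => rw [mul_add, map_add, hg, hh]
  | single w c =>
      rw [MonoidAlgebra.of_apply, MonoidAlgebra.single_mul_single, one_mul, iotaL_single]
      have : iotaWordL (FreeMonoid.of x * w) = MonoidAlgebra.of NCR (FreeMonoid Bool) w := by
        rw [iotaWordL]
        have hl : FreeMonoid.toList (FreeMonoid.of x * w) = x :: FreeMonoid.toList w := rfl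
        simp [hl]
      rw [this]
      simp [MonoidAlgebra.smul_single', MonoidAlgebra.of_apply]

lemma iotaL_Bb_mul (f : NCPoly) : iotaL (Bb * f) = f := iotaL_of_mul true f
lemma iotaL_Aa_mul (f : NCPoly) : iotaL (Aa * f) = f := iotaL_of_mul false f

lemma iotaL_AB_mul (f : NCPoly) : iotaL ((Aa - Bb) * f) = 0 := by
  rw [sub_mul, map_sub, iotaL_Aa_mul, iotaL_Bb_mul, sub_self]

end

open Polynomial
noncomputable section

def wtO (o m : ℕ) (S : Finset ℕ) : NCPoly :=
  ((List.range m).map fun j => if j + o ∈ S then Bb else Aa - Bb).prod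

lemma wtS_eq_wtO (m : ℕ) (S : Finset ℕ) : wtS m S = wtO 0 m S := by
  unfold wtS wtO; simp

lemma wtO_succ (o m : ℕ) (S : Finset ℕ) :
    wtO o (m + 1) S = (if o ∈ S then Bb else Aa - Bb) * wtO (o + 1) m S := by
  unfold wtO
  rw [List.range_succ_eq_map]
  simp only [List.map_cons, List.prod_cons, List.map_map, Nat.zero_add]
  congr 2
  apply List.map_congr_left
  intro j _
  simp only [Function.comp_apply]
  have h : Nat.succ j + o = j + (o + 1) := by omega
  rw [h]

lemma wtO_congr (o o' m : ℕ) (S T : Finset ℕ)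
    (h : ∀ j < m, ((j + o ∈ S) ↔ (j + o' ∈ T))) : wtO o m S = wtO o' m T := by
  unfold wtO
  congr 1
  apply List.map_congr_left
  intro j hj
  rw [List.mem_range] at hj
  by_cases hm : j + o ∈ S
  · rw [if_pos hm, if_pos ((h j hj).1 hm)]
  · rw [if_neg hm, if_neg (fun hc => hm ((h j hj).2 hc))]

lemma wtO_empty (o m : ℕ) : wtO o m (∅ : Finset ℕ) = (Aa - Bb) ^ m := by
  induction m generalizing o with
  | zero => simp [wtO]
  | succ m ih => rw [wtO_succ, ih, pow_succ']; simp

lemma wtO_prefix (o i m : ℕ) (S : Finset ℕ) (h : ∀ j, o ≤ j → j < o + i → j ∉ S) :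
    wtO o (i + m) S = (Aa - Bb) ^ i * wtO (o + i) m S := by
  induction i generalizing o with
  | zero => simp
  | succ i ih =>
      have h1 : i + 1 + m = (i + m) + 1 := by omega
      have h2 : wtO o ((i + m) + 1) S = (Aa - Bb) * wtO (o+1) (i + m) S := by
        rw [wtO_succ, if_neg (h o le_rfl (by omega))]
      have h3 : o + 1 + i = o + (i + 1) := by omega
      rw [h1, h2, ih (o+1) (fun j hj1 hj2 => h j (by omega) (by omega)), h3, pow_succ',
        mul_assoc]

end

open Polynomial Finset
noncomputable section

lemma wtS_empty (m : ℕ) : wtS m (∅ : Finset ℕ) = (Aa - Bb) ^ m := by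
  rw [wtS_eq_wtO, wtO_empty]

lemma wtS_zero_singleton (m : ℕ) : wtS (m+1) ({0} : Finset ℕ) = Bb * (Aa - Bb) ^ m := by
  rw [wtS_eq_wtO, wtO_succ, if_pos (by simp)]
  congr 1
  rw [← wtO_empty 1 m]
  apply wtO_congr
  intro j hj
  simp

lemma wtO_mid (r m : ℕ) (T : Finset ℕ) (hT : ∀ t ∈ T, r < t) :
    wtO r (m + 1) (insert r T) = Bb * wtO (r+1) m T := by
  rw [wtO_succ, if_pos (by simp)]
  congr 1
  apply wtO_congr
  intro j hj
  simp only [Finset.mem_insert]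
  constructor
  · rintro (h | h)
    · omega
    · exact h
  · intro h
    exact Or.inr h

lemma KEY1 (r m : ℕ) (T : Finset ℕ) (hT : ∀ t ∈ T, r < t) :
    wtS (r + m + 1) (insert r T) = (Aa - Bb) ^ r * (Bb * wtO (r+1) m T) := by
  rw [wtS_eq_wtO]
  have h1 : r + m + 1 = r + (m + 1) := by omega
  rw [h1, wtO_prefix 0 r (m+1) _ ?hpre, zero_add, wtO_mid r m T hT]
  case hpre =>
    intro j hj1 hj2
    simp only [Finset.mem_insert, not_or]
    exact ⟨by omega, fun hc => by have := hT j hc; omega⟩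

lemma KEY2 (s m : ℕ) (T : Finset ℕ) (hT : ∀ t ∈ T, s + 1 < t) :
    wtS (s + 1 + m + 1) (insert 0 (insert (s+1) T)) =
      Bb * (Aa - Bb) ^ s * (Bb * wtO (s+2) m T) := by
  rw [wtS_eq_wtO]
  have h1 : s + 1 + m + 1 = (s + 1 + m) + 1 := rfl
  rw [h1, wtO_succ, if_pos (by simp), zero_add]
  have h2 : wtO 1 (s + 1 + m) (insert 0 (insert (s+1) T))
      = wtO 1 (s + 1 + m) (insert (s+1) T) := by
    apply wtO_congr
    intro j hj
    simp only [Finset.mem_insert]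
    constructor
    · rintro (h | h)
      · omega
      · exact h
    · intro h
      exact Or.inr h
  have h3 : s + 1 + m = s + (m + 1) := by omega
  rw [h2, h3, wtO_prefix 1 s (m+1) _ ?hpre]
  case hpre =>
    intro j hj1 hj2
    simp only [Finset.mem_insert, not_or]
    exact ⟨by omega, fun hc => by have := hT j hc; omega⟩
  have h4 : 1 + s = s + 1 := by omega
  rw [h4, wtO_mid (s+1) m T hT]
  have h5 : s + 1 + 1 = s + 2 := rfl
  rw [h5, mul_assoc]

lemma KEY3 (r m : ℕ) (T : Finset ℕ) (hT : ∀ t ∈ T, r < t) :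
    iotaL (wtS (m + 1) (insert 0 (T.image (· - r)))) = wtO (r+1) m T := by
  rw [wtS_eq_wtO, wtO_succ, if_pos (by simp), iotaL_Bb_mul]
  apply wtO_congr
  intro j hj
  simp only [Finset.mem_insert, Finset.mem_image]
  constructor
  · rintro (h | ⟨t, ht, h⟩)
    · omega
    · have := hT t ht
      have : t = j + (r + 1) := by omega
      rwa [← this]
  · intro h
    exact Or.inr ⟨j + (r+1), h, by omega⟩

lemma KEY4 (m : ℕ) (S : Finset ℕ) (h0 : 0 ∉ S) : iotaL (wtS (m + 1) S) = 0 := by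
  rw [wtS_eq_wtO, wtO_succ, if_neg h0, iotaL_AB_mul]

end

open Finset
noncomputable section
variable {P : Type*} [Fintype P] [PartialOrder P]

open Classical in
lemma rk_lt_of_lt (rk : P → ℕ) (hrk_cov : ∀ u v : P, u ⋖ v → rk v = rk u + 1) :
    ∀ {u v : P}, u < v → rk u < rk v := by
  suffices H : ∀ v u : P, u < v → rk u < rk v by
    intro u v h; exact H v u h
  intro v
  induction v using WellFoundedLT.induction with
  | _ v ih =>
    intro u huv
    obtain ⟨x, hx, hmax⟩ :=
      (Finset.univ.filter fun x : P => u ≤ x ∧ x < v).exists_maximal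
        ⟨u, by simp [huv]⟩
    simp only [Finset.mem_filter, Finset.mem_univ, true_and] at hx
    have hcov : x ⋖ v := by
      refine ⟨hx.2, fun y hxy hyv => ?_⟩
      exact absurd (hmax (by
        simp only [Finset.mem_filter, Finset.mem_univ, true_and]
        exact ⟨hx.1.trans hxy.le, hyv⟩) hxy.le) (not_le_of_gt hxy)
    have hrv := hrk_cov x v hcov
    rcases eq_or_lt_of_le hx.1 with rfl | hux
    · omega
    · have := ih x hx.2 u hux
      omega

lemma rk_le_of_le (rk : P → ℕ) (hrk_cov : ∀ u v : P, u ⋖ v → rk v = rk u + 1)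
    {u v : P} (h : u ≤ v) : rk u ≤ rk v := by
  rcases eq_or_lt_of_le h with rfl | h
  · exact le_rfl
  · exact (rk_lt_of_lt rk hrk_cov h).le
end

open Finset
noncomputable section

lemma strictMono_cons {P : Type*} [PartialOrder P] {k : ℕ} {w : P} {d : Fin (k+1) → P}
    (h1 : w < d 0) (h2 : StrictMono d) : StrictMono (Fin.cons w d) := by
  rw [Fin.strictMono_iff_lt_succ]
  intro i
  induction i using Fin.cases with
  | zero => simpa using h1
  | succ j =>
      rw [← Fin.succ_castSucc]
      simp only [Fin.cons_succ]
      exact h2 (Fin.castSucc_lt_succ (i := j))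

variable {P : Type*} [Fintype P] [PartialOrder P] [BoundedOrder P]
variable {M : Type*} [AddCommMonoid M]

open Classical in
lemma chainSum (Q : P → Prop) (hQ : Q ⊤) (f : (k : ℕ) → (Fin (k+1) → P) → M) :
    (∑ k ∈ Finset.range (Fintype.card P),
      ∑ c ∈ Finset.univ.filter fun c : Fin (k+1) → P =>
        StrictMono c ∧ c (Fin.last k) = (⊤ : P) ∧ Q (c 0), f k c)
    = f 0 (fun _ => ⊤) +
      ∑ w ∈ Finset.univ.filter fun w : P => Q w ∧ w < ⊤,
        ∑ k ∈ Finset.range (Fintype.card P),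
          ∑ d ∈ Finset.univ.filter fun d : Fin (k+1) → P =>
            StrictMono d ∧ d (Fin.last k) = (⊤ : P) ∧ w < d 0,
            f (k+1) (Fin.cons w d) := by
  obtain ⟨N, hN⟩ : ∃ N, Fintype.card P = N + 1 :=
    ⟨Fintype.card P - 1, by have : 0 < Fintype.card P := Fintype.card_pos; omega⟩
  rw [hN, Finset.sum_range_succ']
  -- the k = 0 term
  have h0 : (Finset.univ.filter fun c : Fin 1 → P =>
      StrictMono c ∧ c (Fin.last 0) = (⊤ : P) ∧ Q (c 0)) = {fun _ => ⊤} := by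
    ext c
    simp only [Finset.mem_filter, Finset.mem_univ, true_and, Finset.mem_singleton]
    constructor
    · rintro ⟨-, hc, -⟩
      funext i
      have : i = Fin.last 0 := Subsingleton.elim _ _
      rw [this, hc]
    · rintro rfl
      exact ⟨Subsingleton.strictMono _, rfl, hQ⟩
  rw [h0, Finset.sum_singleton, add_comm]
  congr 1
  -- the k ≥ 1 terms
  have step : ∀ i : ℕ,
      (∑ c ∈ Finset.univ.filter fun c : Fin (i+2) → P =>
        StrictMono c ∧ c (Fin.last (i+1)) = (⊤ : P) ∧ Q (c 0), f (i+1) c)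
      = ∑ w ∈ Finset.univ.filter fun w : P => Q w ∧ w < ⊤,
          ∑ d ∈ Finset.univ.filter fun d : Fin (i+1) → P =>
            StrictMono d ∧ d (Fin.last i) = (⊤ : P) ∧ w < d 0,
            f (i+1) (Fin.cons w d) := by
    intro i
    rw [Finset.sum_sigma']
    apply Finset.sum_nbij' (i := fun c => (⟨c 0, Fin.tail c⟩ :
        Σ _ : P, (Fin (i+1) → P)))
      (j := fun x => Fin.cons x.1 x.2)
    · intro c hc
      simp only [Finset.mem_filter, Finset.mem_univ, true_and] at hc
      obtain ⟨hsm, hlast, hq⟩ := hc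
      simp only [Finset.mem_sigma, Finset.mem_filter, Finset.mem_univ, true_and]
      refine ⟨⟨hq, ?_⟩, ?_, ?_, ?_⟩
      · rw [← hlast]
        exact hsm (by
          rw [Fin.lt_def]
          simp [Fin.last])
      · exact hsm.comp (Fin.strictMono_succ)
      · show c ((Fin.last i).succ) = ⊤
        rw [Fin.succ_last, hlast]
      · show c 0 < c (Fin.succ 0)
        exact hsm (Fin.succ_pos 0)
    · intro x hx
      simp only [Finset.mem_sigma, Finset.mem_filter, Finset.mem_univ, true_and] at hx
      obtain ⟨⟨hq, -⟩, hsm, hlast, hlt⟩ := hx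
      simp only [Finset.mem_filter, Finset.mem_univ, true_and]
      refine ⟨strictMono_cons hlt hsm, ?_, by simpa using hq⟩
      rw [← Fin.succ_last, Fin.cons_succ, hlast]
    · intro c _
      exact Fin.cons_self_tail c
    · intro x _
      simp only [Fin.cons_zero, Fin.tail_cons]
    · intro c hc
      simp only [Finset.mem_filter, Finset.mem_univ, true_and] at hc
      rw [Fin.cons_self_tail c]
  calc ∑ i ∈ Finset.range N,
        ∑ c ∈ Finset.univ.filter fun c : Fin (i+1+1) → P =>
          StrictMono c ∧ c (Fin.last (i+1)) = (⊤ : P) ∧ Q (c 0), f (i+1) c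
      = ∑ i ∈ Finset.range N, ∑ w ∈ Finset.univ.filter fun w : P => Q w ∧ w < ⊤,
          ∑ d ∈ Finset.univ.filter fun d : Fin (i+1) → P =>
            StrictMono d ∧ d (Fin.last i) = (⊤ : P) ∧ w < d 0,
            f (i+1) (Fin.cons w d) := by
        exact Finset.sum_congr rfl fun i _ => step i
    _ = ∑ w ∈ Finset.univ.filter fun w : P => Q w ∧ w < ⊤,
          ∑ i ∈ Finset.range N,
          ∑ d ∈ Finset.univ.filter fun d : Fin (i+1) → P =>
            StrictMono d ∧ d (Fin.last i) = (⊤ : P) ∧ w < d 0,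
            f (i+1) (Fin.cons w d) := Finset.sum_comm
    _ = _ := by
        apply Finset.sum_congr rfl
        intro w hw
        rw [Finset.sum_range_succ]
        have hempty : (Finset.univ.filter fun d : Fin (N+1) → P =>
            StrictMono d ∧ d (Fin.last N) = (⊤ : P) ∧ w < d 0) = ∅ := by
          ext d
          simp only [Finset.mem_filter, Finset.mem_univ, true_and,
            Finset.notMem_empty, iff_false, not_and]
          intro hsm hlast
          -- d is strictly monotone from Fin (N+1), card P = N+1, so d is surjective
          have hinj : Function.Injective d := hsm.injective
          have hbij : Function.Bijective d := by
            rw [Fintype.bijective_iff_injective_and_card]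
            exact ⟨hinj, by simp [hN]⟩
          obtain ⟨i, hi⟩ := hbij.surjective ⊥
          intro hlt
          have : d 0 ≤ d i := hsm.monotone (Fin.zero_le i)
          rw [hi] at this
          have : d 0 = ⊥ := le_antisymm this bot_le
          rw [this] at hlt
          exact absurd hlt (by simp)
        rw [hempty, Finset.sum_empty, add_zero]
end

open Polynomial Finset
set_option maxHeartbeats 1000000
noncomputable section

variable {P : Type*} [Fintype P] [PartialOrder P] [BoundedOrder P]

open Classical in
def Dk (w : P) (k : ℕ) : Finset (Fin (k+1) → P) :=
  Finset.univ.filter fun d : Fin (k+1) → P =>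
    StrictMono d ∧ d (Fin.last k) = (⊤ : P) ∧ w < d 0

def PdP (rk : P → ℕ) (k : ℕ) (d : Fin (k+1) → P) : NCR :=
  ∏ i : Fin k, poin rk (d i.castSucc) (d i.succ)

def imgR (rk : P → ℕ) (k : ℕ) (d : Fin (k+1) → P) : Finset ℕ :=
  Finset.univ.image fun i : Fin k => rk (d i.castSucc)

def Bsum (rk : P → ℕ) (n : ℕ) (w : P) : NCPoly :=
  ∑ k ∈ Finset.range (Fintype.card P), ∑ d ∈ Dk w k,
    (poin rk w (d 0) * PdP rk k d) • wtS n (insert (rk w) (imgR rk k d))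

def Csum (rk : P → ℕ) (n : ℕ) (w : P) : NCPoly :=
  ∑ k ∈ Finset.range (Fintype.card P), ∑ d ∈ Dk w k,
    (poin rk (⊥ : P) w * (poin rk w (d 0) * PdP rk k d)) •
      wtS n (insert 0 (insert (rk w) (imgR rk k d)))

def Tsum (rk : P → ℕ) (n : ℕ) (w : P) : NCPoly :=
  ∑ k ∈ Finset.range (Fintype.card P), ∑ d ∈ Dk w k,
    (poin rk w (d 0) * PdP rk k d) • wtO (rk w + 1) (n - rk w - 1) (imgR rk k d)

omit [BoundedOrder P] in
lemma PdP_cons {k : ℕ} (rk : P → ℕ) (w : P) (d : Fin (k+1) → P) :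
    PdP rk (k+1) (Fin.cons w d) = poin rk w (d 0) * PdP rk k d := by
  unfold PdP
  rw [Fin.prod_univ_succ]
  simp only [Fin.castSucc_zero, Fin.cons_zero, Fin.cons_succ, ← Fin.succ_castSucc]

omit [Fintype P] [PartialOrder P] [BoundedOrder P] in
lemma image_cons_g {k : ℕ} (g : P → ℕ) (w : P) (d : Fin (k+1) → P) :
    (Finset.univ.image fun i : Fin (k+1) => g ((Fin.cons w d : Fin (k+2) → P) i.castSucc))
      = insert (g w) (Finset.univ.image fun i : Fin k => g (d i.castSucc)) := by
  ext x
  simp only [Finset.mem_image, Finset.mem_insert, Finset.mem_univ, true_and]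
  constructor
  · rintro ⟨i, rfl⟩
    induction i using Fin.cases with
    | zero => left; rw [Fin.castSucc_zero, Fin.cons_zero]
    | succ j => right; exact ⟨j, by rw [← Fin.succ_castSucc, Fin.cons_succ]⟩
  · rintro (rfl | ⟨j, rfl⟩)
    · exact ⟨0, by rw [Fin.castSucc_zero, Fin.cons_zero]⟩
    · exact ⟨j.succ, by rw [← Fin.succ_castSucc, Fin.cons_succ]⟩

omit [Fintype P] [BoundedOrder P] in
lemma imgR_cons {k : ℕ} (rk : P → ℕ) (w : P) (d : Fin (k+1) → P) :
    imgR rk (k+1) (Fin.cons w d) = insert (rk w) (imgR rk k d) := by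
  unfold imgR
  exact image_cons_g rk w d

open Classical in
lemma LA (rk : P → ℕ) (n : ℕ) (hn : 1 ≤ n)
    (hrk_bot : rk (⊥ : P) = 0) (hrk_top : rk (⊤ : P) = n) :
    exPsiFrom rk (⊥ : P) =
      (Aa - Bb) ^ n + poin rk (⊥ : P) (⊤ : P) • (Bb * (Aa - Bb) ^ (n - 1)) +
        ∑ w ∈ Finset.univ.filter fun w : P => ⊥ < w ∧ w < ⊤,
          (Bsum rk n w + Csum rk n w) := by
  have hbotlt : (⊥ : P) < ⊤ := by
    rcases eq_or_lt_of_le (bot_le : (⊥ : P) ≤ ⊤) with h | h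
    · rw [← h] at hrk_top; omega
    · exact h
  have step1 : exPsiFrom rk (⊥ : P) =
      (PdP rk 0 (fun _ => (⊤ : P)) • wtS n (imgR rk 0 (fun _ => (⊤ : P)))) +
      ∑ w ∈ Finset.univ.filter fun w : P => ((fun x : P => (⊥ : P) ≤ x) w) ∧ w < ⊤,
        ∑ k ∈ Finset.range (Fintype.card P),
          ∑ d ∈ Dk w k, PdP rk (k+1) (Fin.cons w d) • wtS n (imgR rk (k+1) (Fin.cons w d)) := by
    have h := chainSum (M := NCPoly) (fun x : P => (⊥ : P) ≤ x) bot_le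
      (fun k c => PdP rk k c • wtS n (imgR rk k c))
    have hL : exPsiFrom rk (⊥ : P) =
        ∑ k ∈ Finset.range (Fintype.card P),
          ∑ c ∈ Finset.univ.filter fun c : Fin (k+1) → P =>
            StrictMono c ∧ c (Fin.last k) = (⊤ : P) ∧ (⊥ : P) ≤ c 0,
            PdP rk k c • wtS n (imgR rk k c) := by
      unfold exPsiFrom PdP imgR
      simp only [hrk_bot, hrk_top, Nat.sub_zero]
    exact hL.trans h
  have e0 : (PdP rk 0 (fun _ => (⊤ : P)) • wtS n (imgR rk 0 (fun _ => (⊤ : P))))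
      = (Aa - Bb) ^ n := by
    simp [PdP, imgR, wtS_empty]
  have hfil : (Finset.univ.filter fun w : P => ((fun x : P => (⊥ : P) ≤ x) w) ∧ w < ⊤)
      = insert ⊥ (Finset.univ.filter fun w : P => ⊥ < w ∧ w < ⊤) := by
    ext w
    simp only [Finset.mem_filter, Finset.mem_univ, true_and, Finset.mem_insert, bot_le,
      true_and]
    constructor
    · intro h
      rcases (bot_le : (⊥ : P) ≤ w).lt_or_eq with h' | h'
      · exact Or.inr ⟨h', h⟩
      · exact Or.inl h'.symm
    · rintro (rfl | ⟨h1, h2⟩)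
      · exact hbotlt
      · exact h2
  have e1 : ∀ w : P, (∑ k ∈ Finset.range (Fintype.card P),
      ∑ d ∈ Dk w k, PdP rk (k+1) (Fin.cons w d) • wtS n (imgR rk (k+1) (Fin.cons w d)))
      = Bsum rk n w := by
    intro w
    unfold Bsum
    refine Finset.sum_congr rfl fun k _ => Finset.sum_congr rfl fun d _ => ?_
    rw [PdP_cons, imgR_cons]
  -- expand Bsum at ⊥ via chainSum once more
  have e2 : Bsum rk n ⊥ = poin rk (⊥ : P) (⊤ : P) • (Bb * (Aa - Bb) ^ (n - 1)) +
      ∑ w ∈ Finset.univ.filter fun w : P => ⊥ < w ∧ w < ⊤, Csum rk n w := by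
    have h := chainSum (M := NCPoly) (fun x : P => (⊥ : P) < x) hbotlt
      (fun k d => (poin rk (⊥ : P) (d 0) * PdP rk k d) • wtS n (insert 0 (imgR rk k d)))
    have hL : Bsum rk n ⊥ =
        ∑ k ∈ Finset.range (Fintype.card P),
          ∑ d ∈ Finset.univ.filter fun d : Fin (k+1) → P =>
            StrictMono d ∧ d (Fin.last k) = (⊤ : P) ∧ (⊥ : P) < d 0,
            (poin rk (⊥ : P) (d 0) * PdP rk k d) • wtS n (insert 0 (imgR rk k d)) := by
      unfold Bsum Dk
      simp only [hrk_bot]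
    rw [hL.trans h]
    refine congrArg₂ (· + ·) ?_ ?_
    · -- k = 0 term
      have h1 : insert (0 : ℕ) (imgR rk 0 (fun _ => (⊤ : P))) = {0} := by
        unfold imgR; simp
      have h2 : PdP rk 0 (fun _ => (⊤ : P)) = 1 := by
        unfold PdP; simp
      have h3 : n = (n - 1) + 1 := by omega
      show (poin rk (⊥ : P) (⊤ : P) * PdP rk 0 (fun _ => (⊤ : P))) •
          wtS n (insert 0 (imgR rk 0 (fun _ => (⊤ : P))))
        = poin rk (⊥ : P) (⊤ : P) • (Bb * (Aa - Bb) ^ (n - 1))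
      have h4 : wtS n ({0} : Finset ℕ) = Bb * (Aa - Bb) ^ (n - 1) := by
        conv_lhs => rw [h3]
        exact wtS_zero_singleton (n-1)
      rw [h1, h2, mul_one, h4]
    · apply Finset.sum_congr
      · ext w
        simp
      · intro w hw
        unfold Csum
        refine Finset.sum_congr rfl fun k _ => Finset.sum_congr rfl fun d _ => ?_
        show (poin rk (⊥ : P) ((Fin.cons w d : Fin (k+2) → P) 0) * PdP rk (k+1) (Fin.cons w d)) •
            wtS n (insert 0 (imgR rk (k+1) (Fin.cons w d))) = _
        rw [Fin.cons_zero, PdP_cons, imgR_cons]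
  rw [step1, e0, hfil, Finset.sum_insert (by simp)]
  simp only [e1]
  rw [e2, Finset.sum_add_distrib]
  abel
end

open Polynomial Finset
set_option maxHeartbeats 1000000
noncomputable section

variable {P : Type*} [Fintype P] [PartialOrder P] [BoundedOrder P]

lemma mem_Dk {w : P} {k : ℕ} {d : Fin (k+1) → P} (hd : d ∈ Dk w k) :
    StrictMono d ∧ d (Fin.last k) = (⊤ : P) ∧ w < d 0 := by
  unfold Dk at hd
  simpa using hd

lemma imgR_gt (rk : P → ℕ) (hrk_cov : ∀ u v : P, u ⋖ v → rk v = rk u + 1)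
    {w : P} {k : ℕ} {d : Fin (k+1) → P} (hd : d ∈ Dk w k) :
    ∀ t ∈ imgR rk k d, rk w < t := by
  obtain ⟨hsm, -, hlt⟩ := mem_Dk hd
  intro t ht
  unfold imgR at ht
  simp only [Finset.mem_image, Finset.mem_univ, true_and] at ht
  obtain ⟨i, rfl⟩ := ht
  exact rk_lt_of_lt rk hrk_cov (lt_of_lt_of_le hlt (hsm.monotone (Fin.zero_le _)))

open Classical in
lemma LD (rk : P → ℕ) (n : ℕ)
    (hrk_top : rk (⊤ : P) = n)
    (hrk_cov : ∀ u v : P, u ⋖ v → rk v = rk u + 1)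
    (w : P) (hw2 : w < ⊤) :
    exPsiTildeFrom rk w = Tsum rk n w := by
  have hrw : rk w < n := by rw [← hrk_top]; exact rk_lt_of_lt rk hrk_cov hw2
  have hm : n - rk w = (n - rk w - 1) + 1 := by omega
  unfold exPsiTildeFrom
  rw [iota_eq_iotaL]
  have h := chainSum (M := NCPoly) (fun x : P => w ≤ x) (le_top)
    (fun k c => PdP rk k c • wtS (n - rk w)
      (Finset.univ.image fun i : Fin k => rk (c i.castSucc) - rk w))
  have hL : exPsiFrom rk w =
      ∑ k ∈ Finset.range (Fintype.card P),
        ∑ c ∈ Finset.univ.filter fun c : Fin (k+1) → P =>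
          StrictMono c ∧ c (Fin.last k) = (⊤ : P) ∧ w ≤ c 0,
          PdP rk k c • wtS (n - rk w)
            (Finset.univ.image fun i : Fin k => rk (c i.castSucc) - rk w) := by
    unfold exPsiFrom PdP
    simp only [hrk_top]
  rw [hL.trans h, map_add]
  have hA : iotaL (PdP rk 0 (fun _ => (⊤ : P)) • wtS (n - rk w)
      (Finset.univ.image fun i : Fin 0 =>
        rk (((fun _ => (⊤ : P)) : Fin 1 → P) i.castSucc) - rk w)) = 0 := by
    rw [map_smul]
    have he : (Finset.univ.image fun i : Fin 0 =>
        rk (((fun _ => (⊤ : P)) : Fin 1 → P) i.castSucc) - rk w) = (∅ : Finset ℕ) := by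
      simp
    rw [he, hm, KEY4 _ _ (by simp), smul_zero]
  rw [hA, zero_add]
  simp only [map_sum, map_smul]
  rw [Finset.sum_eq_single_of_mem w (by simp [hw2])]
  · -- the v = w term equals Tsum
    unfold Tsum
    refine Finset.sum_congr rfl fun k _ => Finset.sum_congr rfl fun d hd => ?_
    have hi : (Finset.univ.image fun i : Fin (k+1) =>
        rk ((Fin.cons w d : Fin (k+2) → P) i.castSucc) - rk w)
        = insert (rk w - rk w) (Finset.univ.image fun i : Fin k => rk (d i.castSucc) - rk w) :=
      image_cons_g (fun x => rk x - rk w) w d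
    have hi2 : (Finset.univ.image fun i : Fin k => rk (d i.castSucc) - rk w)
        = (imgR rk k d).image (· - rk w) := by
      unfold imgR
      rw [Finset.image_image]
      rfl
    have hkey : iotaL (wtS (n - rk w) (insert 0 ((imgR rk k d).image (· - rk w))))
        = wtO (rk w + 1) (n - rk w - 1) (imgR rk k d) := by
      conv_lhs => rw [hm]
      exact KEY3 (rk w) (n - rk w - 1) (imgR rk k d) (imgR_gt rk hrk_cov hd)
    rw [PdP_cons, hi, hi2, Nat.sub_self, hkey]
  · -- other terms vanish
    intro v hv hne
    have hwv : w < v := by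
      simp only [Finset.mem_filter, Finset.mem_univ, true_and] at hv
      exact lt_of_le_of_ne hv.1 (Ne.symm hne)
    refine Finset.sum_eq_zero fun k _ => Finset.sum_eq_zero fun d hd => ?_
    have hi : (Finset.univ.image fun i : Fin (k+1) =>
        rk ((Fin.cons v d : Fin (k+2) → P) i.castSucc) - rk w)
        = insert (rk v - rk w) (Finset.univ.image fun i : Fin k => rk (d i.castSucc) - rk w) :=
      image_cons_g (fun x => rk x - rk w) v d
    have h0 : (0 : ℕ) ∉ insert (rk v - rk w)
        (Finset.univ.image fun i : Fin k => rk (d i.castSucc) - rk w) := by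
      obtain ⟨hsm, -, hlt⟩ := mem_Dk hd
      have hv1 : rk w < rk v := rk_lt_of_lt rk hrk_cov hwv
      simp only [Finset.mem_insert, Finset.mem_image, Finset.mem_univ, true_and, not_or,
        not_exists]
      constructor
      · omega
      · intro i
        have : rk v < rk (d i.castSucc) :=
          rk_lt_of_lt rk hrk_cov (lt_of_lt_of_le hlt (hsm.monotone (Fin.zero_le _)))
        omega
    rw [hi, hm, KEY4 _ _ h0, smul_zero]

open Classical in
lemma LB (rk : P → ℕ) (n : ℕ)
    (hrk_top : rk (⊤ : P) = n)
    (hrk_cov : ∀ u v : P, u ⋖ v → rk v = rk u + 1)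
    (w : P) (hw2 : w < ⊤) :
    Bsum rk n w = (Aa - Bb) ^ (rk w) * (Bb * Tsum rk n w) := by
  have hrw : rk w < n := by rw [← hrk_top]; exact rk_lt_of_lt rk hrk_cov hw2
  unfold Bsum Tsum
  simp only [Finset.mul_sum, mul_smul_comm]
  refine Finset.sum_congr rfl fun k _ => Finset.sum_congr rfl fun d hd => ?_
  have hkey : wtS n (insert (rk w) (imgR rk k d)) =
      (Aa - Bb) ^ (rk w) * (Bb * wtO (rk w + 1) (n - rk w - 1) (imgR rk k d)) := by
    have h5 : n = rk w + (n - rk w - 1) + 1 := by omega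
    conv_lhs => rw [h5]
    exact KEY1 (rk w) (n - rk w - 1) _ (imgR_gt rk hrk_cov hd)
  rw [hkey]

open Classical in
lemma LC (rk : P → ℕ) (n : ℕ)
    (hrk_top : rk (⊤ : P) = n)
    (hrk_cov : ∀ u v : P, u ⋖ v → rk v = rk u + 1)
    (hrk_bot : rk (⊥ : P) = 0)
    (w : P) (hw1 : ⊥ < w) (hw2 : w < ⊤) :
    Csum rk n w = poin rk (⊥ : P) w •
      (Bb * (Aa - Bb) ^ (rk w - 1) * (Bb * Tsum rk n w)) := by
  have hrw : rk w < n := by rw [← hrk_top]; exact rk_lt_of_lt rk hrk_cov hw2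
  have hrw1 : 1 ≤ rk w := by
    have := rk_lt_of_lt rk hrk_cov hw1
    omega
  unfold Csum Tsum
  simp only [Finset.smul_sum, Finset.mul_sum, mul_smul_comm, smul_smul]
  refine Finset.sum_congr rfl fun k _ => Finset.sum_congr rfl fun d hd => ?_
  obtain ⟨s, hs⟩ : ∃ s, rk w = s + 1 := ⟨rk w - 1, by omega⟩
  rw [hs]
  simp only [Nat.add_sub_cancel]
  have h7 : s + 1 + 1 = s + 2 := by omega
  have hkey : wtS n (insert 0 (insert (s+1) (imgR rk k d))) =
      Bb * (Aa - Bb) ^ s * (Bb * wtO (s + 1 + 1) (n - (s+1) - 1) (imgR rk k d)) := by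
    have h6 : n = s + 1 + (n - (s+1) - 1) + 1 := by omega
    conv_lhs => rw [h6]
    rw [h7]
    exact KEY2 s (n - (s+1) - 1) _ (by
      intro t ht
      have := imgR_gt rk hrk_cov hd t ht
      omega)
  rw [hkey]
end


open Classical in
/-- Recursion for the extended `ab`-index of a finite, graded, bounded poset
of rank `n ≥ 1`. -/
theorem exPsi_recursion
    {P : Type*} [Fintype P] [PartialOrder P] [BoundedOrder P]
    (rk : P → ℕ) (n : ℕ) (hn : 1 ≤ n)
    (hrk_bot : rk (⊥ : P) = 0) (hrk_top : rk (⊤ : P) = n)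
    (hrk_cov : ∀ u v : P, u ⋖ v → rk v = rk u + 1) :
    exPsiFrom rk (⊥ : P) =
      (Aa - Bb) ^ n + poin rk (⊥ : P) (⊤ : P) • (Bb * (Aa - Bb) ^ (n - 1)) +
        ∑ w ∈ Finset.univ.filter fun w : P => ⊥ < w ∧ w < ⊤,
          ((Aa - Bb) ^ rk w + poin rk (⊥ : P) w • (Bb * (Aa - Bb) ^ (rk w - 1))) * Bb *
            exPsiTildeFrom rk w := by
  rw [LA rk n hn hrk_bot hrk_top]
  congr 1
  apply Finset.sum_congr rfl
  intro w hw
  simp only [Finset.mem_filter, Finset.mem_univ, true_and] at hw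
  obtain ⟨hw1, hw2⟩ := hw
  rw [LB rk n hrk_top hrk_cov w hw2, LC rk n hrk_top hrk_cov hrk_bot w hw1 hw2,
    LD rk n hrk_top hrk_cov w hw2]
  rw [add_mul, add_mul, smul_mul_assoc, smul_mul_assoc]
  simp only [mul_assoc]
end

section
/- For every k ≥ 0, (1+y)·ω((a-b)^k) = (1-(-y)^{k+1})·(a-b)^k in ℤ[y]⟨a,b⟩. -/
open Polynomial

noncomputable section

variable {P : Type*} [Fintype P] [PartialOrder P]

variable [BoundedOrder P]

noncomputable section

abbrev Dd : NCPoly := Aa - Bb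

lemma omegaWord_true (l : List Bool) :
    omegaWord (true :: l) = (Bb + (X : NCR) • Aa) * omegaWord l := rfl

def corr : List Bool → NCPoly
  | true :: r => (-X : NCR) • (Dd * (Dd * omegaWord r))
  | _ => 0

lemma omegaWord_false (l : List Bool) :
    omegaWord (false :: l) = (Aa + (X : NCR) • Bb) * omegaWord l + corr l := by
  match l with
  | [] => show _ = _ * _ + 0; rw [add_zero]; rfl
  | false :: r => show _ = _ * _ + 0; rw [add_zero]; rfl
  | true :: r =>
      show (((1 + X : NCR)) • (Aa * Bb) + ((X + X ^ 2 : NCR)) • (Bb * Aa)) * omegaWord r =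
        (Aa + (X : NCR) • Bb) * ((Bb + (X : NCR) • Aa) * omegaWord r) +
          (-X : NCR) • (Dd * (Dd * omegaWord r))
      simp only [Dd, mul_add, add_mul, sub_mul, mul_sub, smul_mul_assoc, mul_smul_comm,
        smul_sub, smul_add, smul_smul, add_smul, mul_assoc]
      module

lemma omega_single (w : FreeMonoid Bool) (c : NCR) :
    omega (MonoidAlgebra.single w c) = c • omegaWord (FreeMonoid.toList w) := by
  unfold omega
  rw [MonoidAlgebra.coeff_single, Finsupp.sum_single_index]
  simp

lemma omega_add (f g : NCPoly) : omega (f + g) = omega f + omega g := by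
  unfold omega
  rw [MonoidAlgebra.coeff_add]
  exact Finsupp.sum_add_index' (by simp) (by intro w c c'; rw [add_smul])

def omegaAdd : NCPoly →+ NCPoly := AddMonoidHom.mk' omega omega_add

def sgn (l : List Bool) : NCR := (-1) ^ (l.count true)

def allWords : ℕ → List (List Bool)
  | 0 => [[]]
  | k + 1 => (allWords k).flatMap (fun l => [false :: l, true :: l])

def mon (l : List Bool) : NCPoly := MonoidAlgebra.single (FreeMonoid.ofList l) (sgn l)

def Sk (k : ℕ) : NCPoly := ((allWords k).map (fun l => sgn l • omegaWord l)).sum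

def Ck : ℕ → NCR
  | 0 => 1
  | k + 1 => 1 - X * Ck k

section helpers
variable {α : Type*} {M : Type*} [AddCommMonoid M]

lemma flat_sum (L : List (List Bool)) (F : List Bool → M) :
    (((L.flatMap fun l => [false :: l, true :: l]).map F)).sum =
      (L.map fun l => F (false :: l) + F (true :: l)).sum := by
  induction L with
  | nil => simp
  | cons h t ih => simp [ih, add_assoc]

lemma map_sum_add (L : List α) (f g : α → M) :
    (L.map fun x => f x + g x).sum = (L.map f).sum + (L.map g).sum := by
  induction L with
  | nil => simp
  | cons h t ih => simp [ih]; abel_nf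

lemma map_sum_smul (L : List α) (c : NCR) (f : α → NCPoly) :
    (L.map fun x => c • f x).sum = c • (L.map f).sum := by
  induction L with
  | nil => simp
  | cons h t ih => simp [ih]

lemma map_sum_mul (L : List α) (c : NCPoly) (f : α → NCPoly) :
    (L.map fun x => c * f x).sum = c * (L.map f).sum := by
  induction L with
  | nil => simp
  | cons h t ih => simp [ih, mul_add]

end helpers

lemma sgn_false (l : List Bool) : sgn (false :: l) = sgn l := by
  simp [sgn]

lemma sgn_true (l : List Bool) : sgn (true :: l) = -sgn l := by
  simp [sgn, pow_succ, List.count_cons]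

lemma expandD (k : ℕ) : Dd ^ k = ((allWords k).map mon).sum := by
  induction k with
  | zero =>
      simp only [allWords, List.map_cons, List.map_nil, List.sum_cons, List.sum_nil, add_zero]
      rw [pow_zero, mon, show sgn [] = 1 from rfl]
      exact MonoidAlgebra.one_def
  | succ k ih =>
      rw [pow_succ', ih, ← map_sum_mul, allWords, flat_sum]
      congr 1
      apply List.map_congr_left
      intro l _
      have ha : Aa * mon l = mon (false :: l) := by
        simp [mon, Aa, MonoidAlgebra.of_apply, MonoidAlgebra.single_mul_single,
          ← FreeMonoid.ofList_cons, sgn_false]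
      have hb : Bb * mon l = -mon (true :: l) := by
        simp [mon, Bb, MonoidAlgebra.of_apply, MonoidAlgebra.single_mul_single,
          ← FreeMonoid.ofList_cons, sgn_true]
      show Dd * mon l = _
      rw [Dd, sub_mul, ha, hb, sub_neg_eq_add]

lemma omega_pow (k : ℕ) : omega (Dd ^ k) = Sk k := by
  have : omega (Dd ^ k) = omegaAdd (Dd ^ k) := rfl
  rw [this, expandD, map_list_sum, List.map_map, Sk]
  congr 1
  apply List.map_congr_left
  intro l _
  show omega (mon l) = _
  rw [mon, omega_single, FreeMonoid.toList_ofList]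

lemma Sk_zero : Sk 0 = 1 := by simp [Sk, allWords, sgn, omegaWord]

lemma Sk_one : Sk 1 = (1 - X : NCR) • Dd := by
  have e : Sk 1 = sgn [false] • omegaWord [false] + (sgn [true] • omegaWord [true] + 0) := rfl
  rw [e]
  show sgn [false] • ((Aa + (X:NCR) • Bb) * 1) + (sgn [true] • ((Bb + (X:NCR) • Aa) * 1) + 0) = _
  simp only [sgn, List.count_cons, List.count_nil, Dd, mul_one, add_zero]
  norm_num
  module

lemma corr_sum (k : ℕ) :
    ((allWords (k + 1)).map fun l => sgn l • corr l).sum = (X : NCR) • (Dd * (Dd * Sk k)) := by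
  rw [show allWords (k+1) = (allWords k).flatMap (fun l => [false :: l, true :: l]) from rfl,
    flat_sum, Sk, ← map_sum_mul, ← map_sum_mul, ← map_sum_smul]
  congr 1
  apply List.map_congr_left
  intro r _
  show sgn (false :: r) • corr (false :: r) + sgn (true :: r) • corr (true :: r) =
    (X : NCR) • (Dd * (Dd * (sgn r • omegaWord r)))
  rw [show corr (false :: r) = 0 from rfl, show corr (true :: r) = (-X : NCR) • (Dd * (Dd * omegaWord r)) from rfl,
    sgn_true, smul_zero, zero_add, smul_smul, mul_smul_comm, mul_smul_comm, smul_smul]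
  congr 1
  ring

lemma Sk_rec (k : ℕ) :
    Sk (k + 2) = (1 - X : NCR) • (Dd * Sk (k + 1)) + (X : NCR) • (Dd * (Dd * Sk k)) := by
  have e : Sk (k + 2) = ((((allWords (k+1)).flatMap fun l => [false :: l, true :: l]).map
      (fun l => sgn l • omegaWord l))).sum := rfl
  rw [e, flat_sum, ← corr_sum k]
  have : ∀ l : List Bool,
      sgn (false :: l) • omegaWord (false :: l) + sgn (true :: l) • omegaWord (true :: l) =
        (1 - X : NCR) • (Dd * (sgn l • omegaWord l)) + sgn l • corr l := by
    intro l
    rw [sgn_false, sgn_true, omegaWord_false, omegaWord_true, Dd]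
    simp only [smul_add, mul_smul_comm, smul_mul_assoc, sub_mul, smul_sub, sub_smul, smul_smul,
      neg_smul, add_mul, one_smul, mul_assoc]
    module
  calc (((allWords (k+1)).map
      (fun l => sgn (false :: l) • omegaWord (false :: l) + sgn (true :: l) • omegaWord (true :: l)))).sum
      = (((allWords (k+1)).map
        (fun l => (1 - X : NCR) • (Dd * (sgn l • omegaWord l)) + sgn l • corr l))).sum := by
        congr 1; exact List.map_congr_left (fun l _ => this l)
    _ = _ := by
        rw [map_sum_add, map_sum_smul, map_sum_mul]
        rfl

lemma Sk_eq (k : ℕ) : Sk k = Ck k • Dd ^ k := by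
  induction k using Nat.twoStepInduction with
  | zero => simp [Sk_zero, Ck]
  | one => simp [Sk_one, Ck, pow_one]
  | more k ih1 ih2 =>
      rw [Sk_rec, ih1, ih2, mul_smul_comm, mul_smul_comm, mul_smul_comm, smul_smul, smul_smul,
        ← pow_succ', ← pow_succ', ← pow_succ', ← add_smul]
      congr 1
      show (1 - X) * Ck (k+1) + X * Ck k = 1 - X * Ck (k + 1)
      rw [show Ck (k+1) = 1 - X * Ck k from rfl]
      ring

lemma oneX_Ck (k : ℕ) : (1 + X : NCR) * Ck k = 1 - (-X) ^ (k + 1) := by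
  induction k with
  | zero => rw [show Ck 0 = 1 from rfl]; ring
  | succ k ih =>
      rw [show Ck (k+1) = 1 - X * Ck k from rfl]
      have : (1 + X : NCR) * (1 - X * Ck k) = (1 + X) - X * ((1 + X) * Ck k) := by ring
      rw [this, ih]
      ring
end

/-- `(1+y)·ω((a-b)^k) = (1-(-y)^{k+1})·(a-b)^k` in `ℤ[y]⟨a,b⟩`. -/
theorem omega_pow_sub (k : ℕ) :
    (1 + X : Polynomial ℤ) • omega ((Aa - Bb) ^ k) =
      ((1 : Polynomial ℤ) - (-X) ^ (k + 1)) • (Aa - Bb) ^ k := by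
  rw [show ((Aa - Bb : NCPoly)) = Dd from rfl, omega_pow, Sk_eq, smul_smul, oneX_Ck]
end
end
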